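/- (Theorem 4, non-hyperbolicity at a maximal inflexion point.) Let P_2 ∈ K[X_0, X_1, X_2] be homogeneous of degree d ≥ 3 with D_2 = {P_2 = 0} nonsingular, and let a nonzero p ∈ K^3 with P_2(p) = 0 represent a maximal inflexion point of D_2, realized by the line L through p with direction v (so v ∈ K^3 is not a scalar multiple of p and P_2(p + t·v) = c·t^d for some nonzero c ∈ K). Let P_1 ∈ K[X_0, X_1, X_2] be a nonzero linear form with P_1(p) = 0 and P_1(v) ≠ 0 (so the line D_1 = {P_1 = 0} passes through p but is different from L). Then there exists a non-constant analytic map from K to P^2(K) omitting both D_1 and D_2; i.e., P^2(K) \ (D_1 ∪ D_2) is not K-hyperbolic. -/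

import Mathlib

open MvPolynomial

lemma finsupp_degree_one {σ : Type*} (d : σ →₀ ℕ) (h : ∑ i ∈ d.support, d i = 1) :
    ∃ j, d = Finsupp.single j 1 := by
  classical
  obtain ⟨j, hj⟩ : d.support.Nonempty := by
    by_contra hne
    rw [Finset.not_nonempty_iff_eq_empty] at hne
    simp [hne] at h
  refine ⟨j, ?_⟩
  have hdj : d j = 1 := le_antisymm
    (h ▸ Finset.single_le_sum (fun i _ => Nat.zero_le _) hj)
    (Nat.one_le_iff_ne_zero.mpr (Finsupp.mem_support_iff.mp hj))
  ext i
  rcases eq_or_ne i j with rfl | hij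
  · simp [hdj]
  · rw [Finsupp.single_eq_of_ne' (Ne.symm hij)]
    by_contra hi0
    have hi : i ∈ d.support := Finsupp.mem_support_iff.mpr hi0
    have : d i + d j ≤ 1 := by
      have : ∑ k ∈ ({i, j} : Finset σ), d k ≤ ∑ k ∈ d.support, d k :=
        Finset.sum_le_sum_of_subset (by
          intro k hk
          simp only [Finset.mem_insert, Finset.mem_singleton] at hk
          rcases hk with rfl | rfl <;> assumption)
      rwa [Finset.sum_pair hij, h] at this
    omega

lemma eval_smul_of_homog {σ : Type*} {R : Type*} [CommSemiring R]
    {P : MvPolynomial σ R} {n : ℕ} (h : P.IsHomogeneous n) (s : R) (x : σ → R) :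
    eval (fun i => s * x i) P = s ^ n * eval x P := by
  rw [eval_eq, eval_eq, Finset.mul_sum]
  refine Finset.sum_congr rfl fun d hd => ?_
  have hdeg : ∑ i ∈ d.support, d i = n := by
    have h1 := h (mem_support_iff.mp hd)
    have h2 : d.degree = n := by rw [Finsupp.degree_eq_weight_one]; exact h1
    exact h2
  calc coeff d P * ∏ i ∈ d.support, (s * x i) ^ d i
      = coeff d P * ((∏ i ∈ d.support, s ^ d i) * ∏ i ∈ d.support, x i ^ d i) := by
        rw [← Finset.prod_mul_distrib]; simp [mul_pow]
    _ = s ^ n * (coeff d P * ∏ i ∈ d.support, x i ^ d i) := by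
        rw [Finset.prod_pow_eq_pow_sum, hdeg]; ring

lemma eval_add_of_linear {σ : Type*} {R : Type*} [CommSemiring R]
    {P : MvPolynomial σ R} (h : P.IsHomogeneous 1) (x y : σ → R) :
    eval (fun i => x i + y i) P = eval x P + eval y P := by
  classical
  rw [eval_eq, eval_eq, eval_eq, ← Finset.sum_add_distrib]
  refine Finset.sum_congr rfl fun d hd => ?_
  obtain ⟨j, rfl⟩ : ∃ j, d = Finsupp.single j 1 := by
    apply finsupp_degree_one
    have h1 := h (mem_support_iff.mp hd)
    have h2 : d.degree = 1 := by rw [Finsupp.degree_eq_weight_one]; exact h1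
    exact h2
  simp [Finsupp.support_single_ne_zero _ one_ne_zero, mul_add]

lemma eval_aeval_poly {σ : Type*} {R : Type*} [CommSemiring R] [Fintype σ]
    (g : σ → Polynomial R) (P : MvPolynomial σ R) (t : R) :
    Polynomial.eval t (MvPolynomial.aeval g P) =
      eval (fun i => Polynomial.eval t (g i)) P := by
  induction P using MvPolynomial.induction_on with
  | C a => simp
  | add f g hf hg => simp [hf, hg]
  | mul_X f i hf => simp [hf]

/-- Theorem 4, non-hyperbolicity at a maximal inflexion point: if a line `D₁`
passes through a maximal inflexion point of a nonsingular curve `D₂` of degree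
`d ≥ 3` and differs from the maximal inflexion line, then `P²(K) \ (D₁ ∪ D₂)` is
not `K`-hyperbolic. -/
theorem maximal_inflexion_not_hyperbolic
    {K : Type*} [NontriviallyNormedField K] [CompleteSpace K] [IsAlgClosed K]
    [IsUltrametricDist K]
    (d : ℕ) (hd : 3 ≤ d)
    (P₂ : MvPolynomial (Fin 3) K) (hP₂ : P₂.IsHomogeneous d)
    (hns₂ : ∀ a : Fin 3 → K, a ≠ 0 → eval a P₂ = 0 →
      ∃ j, eval a (pderiv j P₂) ≠ 0)
    (p : Fin 3 → K) (hp : p ≠ 0) (hp₂ : eval p P₂ = 0)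
    (v : Fin 3 → K) (hv : ¬ ∃ s : K, v = s • p)
    (c : K) (hc : c ≠ 0)
    (hinfl : MvPolynomial.aeval
        (fun i => Polynomial.C (p i) + Polynomial.C (v i) * Polynomial.X) P₂
        = Polynomial.C c * Polynomial.X ^ d)
    (P₁ : MvPolynomial (Fin 3) K) (hP₁ : P₁.IsHomogeneous 1) (hP₁0 : P₁ ≠ 0)
    (hP₁p : eval p P₁ = 0) (hP₁v : eval v P₁ ≠ 0) :
    ∃ f : Fin 3 → K → K,
      (∀ i, ∀ z : K, AnalyticAt K (f i) z) ∧
      (∀ z : K, ∃ i, f i z ≠ 0) ∧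
      (∀ z : K, eval (fun i => f i z) P₁ ≠ 0) ∧
      (∀ z : K, eval (fun i => f i z) P₂ ≠ 0) ∧
      ¬ (∀ z w : K, ∃ c : K, c ≠ 0 ∧ ∀ i, f i z = c * f i w) := by
  -- the line through `v` with direction `p`
  -- evaluation of `P₂` along the inflexion line
  have hline : ∀ t : K, eval (fun i => p i + v i * t) P₂ = c * t ^ d := by
    intro t
    have h := congrArg (Polynomial.eval t) hinfl
    rw [eval_aeval_poly] at h
    simpa using h
  -- evaluation of `P₂` on the plane spanned by `p` and `v` (nonzero coefficient case)
  have hm₂' : ∀ z : K, z ≠ 0 → eval (fun i => z * p i + v i) P₂ = c := by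
    intro z hz
    have h1 : (fun i => z * p i + v i) = fun i => z * (p i + v i * z⁻¹) := by
      funext i
      rw [mul_add]
      congr 1
      rw [mul_comm (v i) z⁻¹, ← mul_assoc, mul_inv_cancel₀ hz, one_mul]
    rw [h1, eval_smul_of_homog hP₂, hline]
    field_simp
    rw [← mul_pow, mul_one_div_cancel hz, one_pow]
  have hv₂ : eval v P₂ = c := by
    set Q : Polynomial K :=
      MvPolynomial.aeval (fun i => Polynomial.C (p i) * Polynomial.X + Polynomial.C (v i)) P₂
        - Polynomial.C c with hQdef
    have hinf : {t : K | t ≠ 0}.Infinite := by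
      have h := (Set.finite_singleton (0 : K)).infinite_compl
      have he : ({0}ᶜ : Set K) = {t : K | t ≠ 0} := by ext t; simp
      rwa [he] at h
    have hQ : Q = 0 := by
      apply Polynomial.eq_zero_of_infinite_isRoot
      refine hinf.mono fun t ht' => ?_
      show Polynomial.eval t Q = 0
      rw [hQdef]
      simp only [Polynomial.eval_sub, Polynomial.eval_C, eval_aeval_poly,
        Polynomial.eval_add, Polynomial.eval_mul, Polynomial.eval_C, Polynomial.eval_X]
      have hm := hm₂' t ht'
      rw [show (fun i => p i * t + v i) = fun i => t * p i + v i from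
        funext fun i => by ring, hm, sub_self]
    have h0 := congrArg (Polynomial.eval 0) hQ
    rw [hQdef] at h0
    simp only [Polynomial.eval_sub, Polynomial.eval_C, eval_aeval_poly,
      Polynomial.eval_add, Polynomial.eval_mul, Polynomial.eval_C, Polynomial.eval_X,
      Polynomial.eval_zero, mul_zero, zero_add, sub_eq_zero] at h0
    exact h0
  have hm₂ : ∀ z : K, eval (fun i => z * p i + v i) P₂ = c := by
    intro z
    rcases eq_or_ne z 0 with rfl | hz
    · simpa using hv₂
    · exact hm₂' z hz
  -- evaluation of `P₁` on the line `z ↦ z • p + v`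
  have hm₁ : ∀ z : K, eval (fun i => z * p i + v i) P₁ = eval v P₁ := by
    intro z
    rw [eval_add_of_linear hP₁ (fun i => z * p i) v, eval_smul_of_homog hP₁ z p]
    simp [hP₁p]
  refine ⟨fun i z => z * p i + v i, ?_, ?_, ?_, ?_, ?_⟩
  · intro i z
    exact ((analyticAt_id.mul analyticAt_const).add analyticAt_const)
  · intro z
    by_contra h
    push_neg at h
    refine hv ⟨-z, funext fun i => ?_⟩
    have hi := h i
    simp only [Pi.smul_apply, smul_eq_mul]
    linear_combination hi
  · intro z
    rw [hm₁ z]; exact hP₁v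
  · intro z
    rw [hm₂ z]; exact hc
  · intro hcon
    obtain ⟨lam, hlam0, hlam⟩ := hcon 0 1
    have hfun : (fun i => (0:K) * p i + v i) = fun i => lam * ((1:K) * p i + v i) :=
      funext fun i => hlam i
    have h1 : eval (fun i => (0:K) * p i + v i) P₁
        = eval (fun i => lam * ((1:K) * p i + v i)) P₁ := by rw [hfun]
    rw [eval_smul_of_homog hP₁, hm₁ 0, hm₁ 1, pow_one] at h1
    have hlam1 : lam = 1 := by
      have h2 : (lam - 1) * eval v P₁ = 0 := by linear_combination -h1
      rcases mul_eq_zero.mp h2 with h3 | h3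
      · exact sub_eq_zero.mp h3
      · exact absurd h3 hP₁v
    apply hp
    funext i
    simp only [Pi.zero_apply]
    have := hlam i
    rw [hlam1] at this
    simp only [zero_mul, one_mul, zero_add] at this
    linear_combination -this
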